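/- As the integer k → ∞, log ∏_{2√k < p ≤ k, p prime} p/(p − a_{1,p}(k)) = O(√k · log log k). -/

import Mathlib

open Finset Filter Real Asymptotics

/-- `digit i p k` is the `i`-th digit of `k` in base `p`, i.e. `⌊k / p^i⌋ mod p`. -/
def digit (i p k : ℕ) : ℕ := (k / p ^ i) % p

/-- Telescoping sum `∑_{m ≤ p < n} (1/(p-1) - 1/p) = 1/(m-1) - 1/(n-1)`. -/
lemma tele_sum (m : ℕ) : ∀ n : ℕ, m ≤ n →
    ∑ p ∈ Finset.Ico m n, (1/((p:ℝ)-1) - 1/(p:ℝ)) = 1/((m:ℝ)-1) - 1/((n:ℝ)-1) := by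
  intro n
  induction n with
  | zero =>
    intro h
    interval_cases m
    simp
  | succ n ih =>
    intro h
    rcases Nat.lt_or_ge m (n+1) with h1 | h1
    · have hmn : m ≤ n := by omega
      rw [Finset.sum_Ico_succ_top hmn, ih hmn]
      push_cast
      ring
    · have : m = n + 1 := by omega
      subst this
      simp
  
/-- `log ∏_{2√k < p ≤ k} p/(p − a_{1,p}(k)) = O(√k · log log k)`.
Here `2√k < p` is expressed as `4 * k < p * p`. -/
theorem upper_middle_product_bound :
    (fun k : ℕ =>
        Real.log (∏ p ∈ (Finset.range (k + 1)).filter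
            (fun p => p.Prime ∧ 4 * k < p * p),
          (p : ℝ) / (p - digit 1 p k)))
      =O[atTop] (fun k : ℕ => Real.sqrt k * Real.log (Real.log k)) := by
  rw [Asymptotics.isBigO_iff]
  refine ⟨3, ?_⟩
  filter_upwards [eventually_ge_atTop 16] with k hk
  set F := (Finset.range (k + 1)).filter (fun p => p.Prime ∧ 4 * k < p * p) with hF
  set s := Nat.sqrt k with hs
  have hkR : (16:ℝ) ≤ (k:ℝ) := by exact_mod_cast hk
  have hk0 : (0:ℝ) < (k:ℝ) := by linarith
  have hsqrt4 : (4:ℝ) ≤ Real.sqrt k := by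
    have h16 : (4:ℝ) = Real.sqrt 16 := by
      rw [show (16:ℝ) = 4^2 by norm_num, Real.sqrt_sq (by norm_num : (0:ℝ) ≤ 4)]
    rw [h16]
    exact Real.sqrt_le_sqrt hkR
  have hsqsq : Real.sqrt k * Real.sqrt k = (k:ℝ) := Real.mul_self_sqrt hk0.le
  have hs4 : 4 ≤ s := Nat.le_sqrt.mpr (by omega)
  have hsk : s ≤ k := Nat.sqrt_le_self k
  have hs0R : (0:ℝ) < (s:ℝ) := by
    have : (4:ℝ) ≤ (s:ℝ) := by exact_mod_cast hs4
    linarith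
  -- s + 1 > √k
  have hsR : Real.sqrt k - 1 ≤ (s:ℝ) := by
    have h1 : k < (s+1) * (s+1) := Nat.lt_succ_sqrt k
    have h2 : (k:ℝ) < ((s:ℝ)+1)^2 := by
      have h3 := (Nat.cast_lt (α := ℝ)).mpr h1
      push_cast at h3
      nlinarith [h3]
    have h3 : Real.sqrt k < (s:ℝ) + 1 := by
      exact (Real.sqrt_lt' (by linarith)).mpr h2
    linarith
  -- per-element facts
  have elem : ∀ p ∈ F, p.Prime ∧ 4 * k < p * p := fun p hp => (Finset.mem_filter.mp hp).2
  have hkpp : ∀ p ∈ F, k < p * p := by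
    intro p hp
    exact lt_of_le_of_lt (by omega : k ≤ 4 * k) (elem p hp).2
  have hdig : ∀ p ∈ F, digit 1 p k = k / p := by
    intro p hp
    obtain ⟨hpr, h4⟩ := elem p hp
    have h1 : k / p < p := (Nat.div_lt_iff_lt_mul hpr.pos).mpr (hkpp p hp)
    simp [digit, pow_one, Nat.mod_eq_of_lt h1]
  have h4a : ∀ p ∈ F, 4 * (k / p) < p := by
    intro p hp
    obtain ⟨hpr, h4⟩ := elem p hp
    have h1 : (k / p) * p ≤ k := Nat.div_mul_le_self k p
    have h2 : 4 * (k / p) * p < p * p := by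
      calc 4 * (k / p) * p = 4 * ((k / p) * p) := by ring
      _ ≤ 4 * k := Nat.mul_le_mul_left 4 h1
      _ < p * p := h4
    exact Nat.lt_of_mul_lt_mul_right h2
  -- factor ≥ 1
  have hfac : ∀ p ∈ F, (1:ℝ) ≤ (p:ℝ) / ((p:ℝ) - (digit 1 p k : ℝ)) := by
    intro p hp
    rw [hdig p hp]
    have h1 : 4 * ((k/p : ℕ):ℝ) < (p:ℝ) := by exact_mod_cast h4a p hp
    have h2 : (0:ℝ) ≤ ((k/p : ℕ):ℝ) := Nat.cast_nonneg _
    have h3 : (0:ℝ) < (p:ℝ) - ((k/p:ℕ):ℝ) := by linarith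
    rw [le_div_iff₀ h3]
    linarith
  have hfacpos : ∀ p ∈ F, (0:ℝ) < (p:ℝ) / ((p:ℝ) - (digit 1 p k : ℝ)) :=
    fun p hp => lt_of_lt_of_le one_pos (hfac p hp)
  have hprodge : (1:ℝ) ≤ ∏ p ∈ F, (p:ℝ) / ((p:ℝ) - (digit 1 p k : ℝ)) := by
    calc (1:ℝ) = ∏ _p ∈ F, (1:ℝ) := by simp
    _ ≤ ∏ p ∈ F, (p:ℝ) / ((p:ℝ) - (digit 1 p k : ℝ)) :=
        Finset.prod_le_prod (fun p _ => zero_le_one) hfac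
  have hlogprod : Real.log (∏ p ∈ F, (p:ℝ) / ((p:ℝ) - (digit 1 p k : ℝ)))
      = ∑ p ∈ F, Real.log ((p:ℝ) / ((p:ℝ) - (digit 1 p k : ℝ))) :=
    Real.log_prod (fun p hp => ne_of_gt (hfacpos p hp))
  -- termwise bound
  have hterm : ∀ p ∈ F, Real.log ((p:ℝ) / ((p:ℝ) - (digit 1 p k : ℝ)))
      ≤ (4 * (k:ℝ) / 3) * (1/((p:ℝ)-1) - 1/(p:ℝ)) := by
    intro p hp
    obtain ⟨hpr, h4⟩ := elem p hp
    rw [hdig p hp]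
    set a : ℝ := ((k/p : ℕ):ℝ) with ha
    have h1 : 4 * a < (p:ℝ) := by rw [ha]; exact_mod_cast h4a p hp
    have ha0 : (0:ℝ) ≤ a := Nat.cast_nonneg _
    have hpa : (0:ℝ) < (p:ℝ) - a := by linarith
    have hpane : (p:ℝ) - a ≠ 0 := ne_of_gt hpa
    have hp2 : (2:ℝ) ≤ (p:ℝ) := by exact_mod_cast hpr.two_le
    have hp0 : (0:ℝ) < (p:ℝ) := by linarith
    have hp0ne : (p:ℝ) ≠ 0 := ne_of_gt hp0
    have hp1ne : (p:ℝ) - 1 ≠ 0 := ne_of_gt (by linarith)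
    have hap : a * (p:ℝ) ≤ (k:ℝ) := by
      rw [ha]
      have h5 := Nat.div_mul_le_self k p
      exact_mod_cast h5
    have hlog : Real.log ((p:ℝ)/((p:ℝ)-a)) ≤ (p:ℝ)/((p:ℝ)-a) - 1 :=
      Real.log_le_sub_one_of_pos (by positivity)
    have heq : (p:ℝ)/((p:ℝ)-a) - 1 = a/((p:ℝ)-a) := by
      field_simp
      ring
    have hrw : (1:ℝ)/((p:ℝ)-1) - 1/(p:ℝ) = 1/(((p:ℝ)-1)*(p:ℝ)) := by
      field_simp
      ring
    have hden : (0:ℝ) < ((p:ℝ)-1)*(p:ℝ) := by nlinarith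
    have hstep : a/((p:ℝ)-a) ≤ (4 * (k:ℝ) / 3) * (1/(((p:ℝ)-1)*(p:ℝ))) := by
      rw [mul_one_div, div_le_div_iff₀ hpa hden]
      nlinarith [mul_le_mul_of_nonneg_right hap hpa.le,
        mul_nonneg (mul_nonneg ha0 hp0.le) (by linarith : (0:ℝ) ≤ (p:ℝ) + 3 - 4*a)]
    rw [hrw]
    calc Real.log ((p:ℝ)/((p:ℝ)-a)) ≤ (p:ℝ)/((p:ℝ)-a) - 1 := hlog
    _ = a/((p:ℝ)-a) := heq
    _ ≤ _ := hstep
  -- subset into Ico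
  have hFsub : F ⊆ Finset.Ico (s+1) (k+1) := by
    intro p hp
    have hpk : p ∈ Finset.range (k+1) := Finset.mem_of_mem_filter p hp
    rw [Finset.mem_Ico]
    constructor
    · have hlt : s < p := Nat.sqrt_lt'.mpr (by rw [pow_two]; exact hkpp p hp)
      omega
    · exact Finset.mem_range.mp hpk
  have hnn : ∀ p ∈ Finset.Ico (s+1) (k+1), (0:ℝ) ≤ 1/((p:ℝ)-1) - 1/(p:ℝ) := by
    intro p hp
    rw [Finset.mem_Ico] at hp
    have hp2 : 2 ≤ p := by omega
    have hp2R : (2:ℝ) ≤ (p:ℝ) := by exact_mod_cast hp2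
    have h1 : (0:ℝ) < (p:ℝ) - 1 := by linarith
    rw [sub_nonneg]
    apply one_div_le_one_div_of_le h1
    linarith
  -- telescoping
  have htel : ∑ p ∈ Finset.Ico (s+1) (k+1), (1/((p:ℝ)-1) - 1/(p:ℝ)) ≤ 1/(s:ℝ) := by
    rw [tele_sum (s+1) (k+1) (by omega)]
    have e1 : ((s+1:ℕ):ℝ) - 1 = (s:ℝ) := by push_cast; ring
    have e2 : ((k+1:ℕ):ℝ) - 1 = (k:ℝ) := by push_cast; ring
    rw [e1, e2]
    have h1 : (0:ℝ) ≤ 1/(k:ℝ) := by positivity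
    linarith
  -- assemble sum bound
  have hsum : ∑ p ∈ F, Real.log ((p:ℝ) / ((p:ℝ) - (digit 1 p k : ℝ)))
      ≤ (4 * (k:ℝ) / 3) * (1/(s:ℝ)) := by
    calc ∑ p ∈ F, Real.log ((p:ℝ) / ((p:ℝ) - (digit 1 p k : ℝ)))
        ≤ ∑ p ∈ F, (4 * (k:ℝ) / 3) * (1/((p:ℝ)-1) - 1/(p:ℝ)) := Finset.sum_le_sum hterm
    _ = (4 * (k:ℝ) / 3) * ∑ p ∈ F, (1/((p:ℝ)-1) - 1/(p:ℝ)) := by rw [Finset.mul_sum]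
    _ ≤ (4 * (k:ℝ) / 3) * ∑ p ∈ Finset.Ico (s+1) (k+1), (1/((p:ℝ)-1) - 1/(p:ℝ)) := by
        apply mul_le_mul_of_nonneg_left _ (by positivity)
        exact Finset.sum_le_sum_of_subset_of_nonneg hFsub (fun p hp _ => hnn p hp)
    _ ≤ (4 * (k:ℝ) / 3) * (1/(s:ℝ)) :=
        mul_le_mul_of_nonneg_left htel (by positivity)
  -- k/s ≤ 2 √k
  have hks : (4 * (k:ℝ) / 3) * (1/(s:ℝ)) ≤ (8/3) * Real.sqrt k := by
    rw [mul_one_div, div_le_iff₀ hs0R]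
    nlinarith [hsqsq, hsqrt4, hsR,
      mul_le_mul_of_nonneg_left hsR (by positivity : (0:ℝ) ≤ (8/3) * Real.sqrt k),
      mul_le_mul_of_nonneg_right hsqrt4 (Real.sqrt_nonneg (k:ℝ))]
  -- log log k ≥ 1
  have hloglog : (1:ℝ) ≤ Real.log (Real.log (k:ℝ)) := by
    have h16 : Real.exp 1 ≤ Real.log (k:ℝ) := by
      have h1 : Real.log 16 ≤ Real.log (k:ℝ) := Real.log_le_log (by norm_num) hkR
      have h2 : Real.log (16:ℝ) = 4 * Real.log 2 := by
        rw [show (16:ℝ) = 2^4 by norm_num, Real.log_pow]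
        push_cast; ring
      have h3 : (0.6931471803:ℝ) < Real.log 2 := Real.log_two_gt_d9
      have h4 : Real.exp 1 < 2.7182818286 := Real.exp_one_lt_d9
      linarith
    have h5 : (0:ℝ) < Real.exp 1 := Real.exp_pos 1
    calc (1:ℝ) = Real.log (Real.exp 1) := (Real.log_exp 1).symm
    _ ≤ Real.log (Real.log (k:ℝ)) := Real.log_le_log h5 h16
  -- finish
  have hsqnn : (0:ℝ) ≤ Real.sqrt k := Real.sqrt_nonneg _
  have hmul : Real.sqrt k * 1 ≤ Real.sqrt k * Real.log (Real.log (k:ℝ)) :=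
    mul_le_mul_of_nonneg_left hloglog hsqnn
  have hlhs : Real.log (∏ p ∈ F, (p:ℝ) / ((p:ℝ) - (digit 1 p k : ℝ)))
      ≤ 3 * (Real.sqrt k * Real.log (Real.log k)) := by
    rw [hlogprod]
    calc ∑ p ∈ F, Real.log ((p:ℝ) / ((p:ℝ) - (digit 1 p k : ℝ)))
        ≤ (4 * (k:ℝ) / 3) * (1/(s:ℝ)) := hsum
    _ ≤ (8/3) * Real.sqrt k := hks
    _ ≤ 3 * (Real.sqrt k * Real.log (Real.log k)) := by linarith
  have hlognn : (0:ℝ) ≤ Real.log (∏ p ∈ F, (p:ℝ) / ((p:ℝ) - (digit 1 p k : ℝ))) :=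
    Real.log_nonneg hprodge
  have hrhsnn : (0:ℝ) ≤ Real.sqrt k * Real.log (Real.log (k:ℝ)) :=
    mul_nonneg hsqnn (by linarith)
  rw [Real.norm_eq_abs, Real.norm_eq_abs, abs_of_nonneg hlognn, abs_of_nonneg hrhsnn]
  exact hlhs
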